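/- arXiv:1911.11246 — 2 statements merged into one kernel-verified Lean document; each statement's English description precedes it below -/
import Mathlib

section
/- For every odd integer n ≥ 1, the number of pairs (u,v) of odd integers with 1 ≤ u,v ≤ n-1 and 2u + v > 2n equals floor((n-1)/4) * floor((n-3)/4). -/
open Finset

lemma cardT' (m : ℕ) :
    ((Finset.Icc (1:ℤ) (2*m)).filter (fun u => Odd u ∧ 2*u > 2*(m:ℤ)+1)).card = m/2 := by
  have h : (Finset.Icc (1:ℤ) (2*m)).filter (fun u => Odd u ∧ 2*u > 2*(m:ℤ)+1)
      = (Finset.Icc (1:ℤ) ((m:ℤ)/2)).image (fun k => 2*(m:ℤ)+1 - 2*k) := by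
    ext u
    simp only [mem_image, mem_filter, mem_Icc, Int.odd_iff]
    constructor
    · rintro ⟨⟨h1, h2⟩, h3, h4⟩
      exact ⟨(2*(m:ℤ)+1-u)/2, by omega, by omega⟩
    · rintro ⟨k, hk, rfl⟩
      omega
  rw [h, card_image_of_injective _ (fun a b hab => by omega), Int.card_Icc]
  omega

lemma key (m : ℕ) :
    (((Finset.Icc (1:ℤ) (2*m)) ×ˢ (Finset.Icc (1:ℤ) (2*m))).filter
        (fun p => Odd p.1 ∧ Odd p.2 ∧ 2 * p.1 + p.2 > 2 * (2*(m:ℤ)+1))).card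
      = (m/2) * ((m-1)/2) := by
  induction m with
  | zero => simp
  | succ m ih =>
    have hset :
        (((Finset.Icc (1:ℤ) (2*(m+1:ℕ))) ×ˢ (Finset.Icc (1:ℤ) (2*(m+1:ℕ)))).filter
          (fun p => Odd p.1 ∧ Odd p.2 ∧ 2 * p.1 + p.2 > 2 * (2*((m+1:ℕ):ℤ)+1)))
        = ((((Finset.Icc (1:ℤ) (2*m)) ×ˢ (Finset.Icc (1:ℤ) (2*m))).filter
            (fun p => Odd p.1 ∧ Odd p.2 ∧ 2 * p.1 + p.2 > 2 * (2*(m:ℤ)+1))).image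
              (fun p => (p.1 + 2, p.2)))
          ∪ (((Finset.Icc (1:ℤ) (2*m)).filter (fun u => Odd u ∧ 2*u > 2*(m:ℤ)+1)).image
              (fun u => (u + 2, 2*(m:ℤ)+1))) := by
      ext ⟨u, v⟩
      simp only [mem_union, mem_image, mem_filter, mem_product, mem_Icc, Int.odd_iff,
        Prod.mk.injEq, Prod.exists, Nat.cast_add, Nat.cast_one, Nat.cast_mul,
        Nat.cast_ofNat]
      constructor
      · rintro ⟨⟨⟨hu1, hu2⟩, hv1, hv2⟩, hou, hov, hgt⟩
        by_cases hv : v ≤ 2*(m:ℤ) - 1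
        · left
          exact ⟨u - 2, v, ⟨⟨⟨by omega, by omega⟩, by omega, by omega⟩, by omega, by omega⟩, by omega, by omega⟩
        · right
          exact ⟨u - 2, ⟨⟨by omega, by omega⟩, by omega, by omega⟩, by omega, by omega⟩
      · rintro (⟨a, b, ⟨⟨⟨h1, h2⟩, h3, h4⟩, h5, h6⟩, rfl, rfl⟩ | ⟨a, ⟨⟨h1, h2⟩, h3, h4⟩, rfl, rfl⟩) <;>
          refine ⟨⟨⟨by omega, by omega⟩, by omega, by omega⟩, by omega, by omega, by omega⟩
    have hdis : Disjoint
        ((((Finset.Icc (1:ℤ) (2*m)) ×ˢ (Finset.Icc (1:ℤ) (2*m))).filter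
            (fun p => Odd p.1 ∧ Odd p.2 ∧ 2 * p.1 + p.2 > 2 * (2*(m:ℤ)+1))).image
              (fun p => (p.1 + 2, p.2)))
          (((Finset.Icc (1:ℤ) (2*m)).filter (fun u => Odd u ∧ 2*u > 2*(m:ℤ)+1)).image
              (fun u => (u + 2, 2*(m:ℤ)+1))) := by
      rw [Finset.disjoint_left]
      rintro ⟨u, v⟩ h1 h2
      simp only [mem_image, mem_filter, mem_product, mem_Icc, Int.odd_iff, Prod.mk.injEq,
        Prod.exists] at h1 h2
      obtain ⟨a, b, ⟨⟨_, hb⟩, _, _⟩, _, rfl⟩ := h1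
      obtain ⟨c, ⟨⟨_, _⟩, _, _⟩, _, rfl⟩ := h2
      omega
    rw [hset, card_union_of_disjoint hdis,
      card_image_of_injective _ (fun a b hab => by
        simp only [Prod.mk.injEq] at hab
        exact Prod.ext (by omega) hab.2),
      card_image_of_injective _ (fun a b hab => by simp only [Prod.mk.injEq] at hab; omega), ih, cardT']
    rcases Nat.even_or_odd m with ⟨k, rfl⟩ | ⟨k, rfl⟩
    · have h1 : (k+k+1)/2 = k := by omega
      have h2 : (k+k)/2 = k := by omega
      have h3 : (k+k+1-1)/2 = k := by omega
      rw [h1, h2, h3]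
      cases k with
      | zero => rfl
      | succ j =>
        have : j + 1 + (j+1) - 1 = 2*j + 1 := by omega
        rw [this]
        have : (2*j+1)/2 = j := by omega
        rw [this]
        ring
    · have h1 : (2*k+1+1)/2 = k+1 := by omega
      have h2 : (2*k+1)/2 = k := by omega
      have h3 : (2*k+1-1)/2 = k := by omega
      have h4 : (2*k+1+1-1)/2 = k := by omega
      rw [h1, h2, h3, h4]
      ring

theorem stmt_7 (n : ℤ) (hn : 1 ≤ n) (hodd : Odd n) :
    ((((Finset.Icc (1 : ℤ) (n - 1)) ×ˢ (Finset.Icc (1 : ℤ) (n - 1))).filter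
        (fun p => Odd p.1 ∧ Odd p.2 ∧ 2 * p.1 + p.2 > 2 * n)).card : ℤ) =
      ⌊((n : ℚ) - 1) / 4⌋ * ⌊((n : ℚ) - 3) / 4⌋ := by
  obtain ⟨m, rfl⟩ : ∃ m : ℕ, n = 2*m+1 := by
    obtain ⟨j, hj⟩ := hodd
    exact ⟨j.toNat, by omega⟩
  have h1 : (2*(m:ℤ)+1) - 1 = 2*(m:ℤ) := by ring
  rw [h1, key m]
  rw [show (((2*(m:ℤ)+1 : ℤ) : ℚ) - 1)/4 = (Int.cast (2*(m:ℤ)) : ℚ)/(Nat.cast 4 : ℚ) by push_cast; ring,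
      show (((2*(m:ℤ)+1 : ℤ) : ℚ) - 3)/4 = (Int.cast (2*(m:ℤ)-2) : ℚ)/(Nat.cast 4 : ℚ) by push_cast; ring,
      Rat.floor_intCast_div_natCast, Rat.floor_intCast_div_natCast]
  rcases Nat.eq_zero_or_pos m with rfl | hm
  · norm_num
  · have a1 : ((m/2 : ℕ) : ℤ) = (2*(m:ℤ))/((4:ℕ):ℤ) := by
      have : ((4:ℕ):ℤ) = 4 := by norm_num
      rw [this]; omega
    have a2 : (((m-1)/2 : ℕ) : ℤ) = (2*(m:ℤ)-2)/((4:ℕ):ℤ) := by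
      have : ((4:ℕ):ℤ) = 4 := by norm_num
      rw [this]; omega
    rw [Nat.cast_mul, a1, a2]
end

section
/- Let n > 1 and let f be a Littlewood polynomial of length n whose coefficients are independent random variables uniform on {1,-1}. Then E(‖f‖₄⁴) = 2n² - n. -/
open MeasureTheory

/-- The fourth power of the `L₄` norm of `f(z) = ∑_{j<n} a_j z^j` on the unit circle. -/
noncomputable def L4pow4 (n : ℕ) (a : ℕ → ℝ) : ℝ :=
  (1 / (2 * Real.pi)) * ∫ θ in (0:ℝ)..(2 * Real.pi),
    (‖∑ j ∈ Finset.range n, (a j : ℂ) * Complex.exp ((θ : ℂ) * Complex.I) ^ j‖) ^ 4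

/-- Extend a ±1 coefficient vector indexed by `Fin n` (given as Booleans) to `ℕ → ℝ`. -/
def signs (n : ℕ) (a : Fin n → Bool) : ℕ → ℝ :=
  fun j => if h : j < n then (if a ⟨j, h⟩ then 1 else -1) else 0

open Finset

lemma pointwise_expand (n : ℕ) (a : ℕ → ℝ) (θ : ℝ) :
    (‖∑ j ∈ Finset.range n, (a j : ℂ) * Complex.exp ((θ : ℂ) * Complex.I) ^ j‖) ^ 4
      = ∑ j ∈ range n, ∑ k ∈ range n, ∑ l ∈ range n, ∑ m ∈ range n,
          a j * a k * a l * a m * Real.cos (((j:ℝ) + l - k - m) * θ) := by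
  set F : ℂ := ∑ j ∈ Finset.range n, (a j : ℂ) * Complex.exp ((θ : ℂ) * Complex.I) ^ j with hF
  have h1 : (‖F‖) ^ 4 = (F ^ 2 * ((starRingEnd ℂ) F) ^ 2).re := by
    rw [← mul_pow, Complex.mul_conj, ← Complex.ofReal_pow, Complex.ofReal_re,
      Complex.normSq_eq_norm_sq]
    ring
  have h2 : (starRingEnd ℂ) F = ∑ k ∈ range n, (a k : ℂ) * Complex.exp (-((θ:ℂ) * Complex.I)) ^ k := by
    rw [hF, map_sum]
    refine Finset.sum_congr rfl fun k _ => ?_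
    rw [map_mul, map_pow, Complex.conj_ofReal, ← Complex.exp_conj]
    congr 2
    simp [Complex.conj_I]
  have h3 : F ^ 2 * ((starRingEnd ℂ) F) ^ 2
      = ∑ j ∈ range n, ∑ k ∈ range n, ∑ l ∈ range n, ∑ m ∈ range n,
        ((a j * a k * a l * a m : ℝ) : ℂ)
          * Complex.exp (((((j:ℝ) + l - k - m) * θ : ℝ) : ℂ) * Complex.I) := by
    rw [h2, hF, sq, sq, Finset.sum_mul_sum, Finset.sum_mul_sum]
    rw [Finset.sum_mul_sum]
    refine Finset.sum_congr rfl fun j _ => ?_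
    refine Finset.sum_congr rfl fun k _ => ?_
    rw [Finset.sum_mul_sum]
    refine Finset.sum_congr rfl fun l _ => ?_
    refine Finset.sum_congr rfl fun m _ => ?_
    rw [show (((((j:ℝ) + l - k - m) * θ : ℝ) : ℂ) * Complex.I)
        = (j : ℕ) * ((θ:ℂ) * Complex.I) + ((l : ℕ) * ((θ:ℂ) * Complex.I)
          + ((k : ℕ) * (-((θ:ℂ) * Complex.I)) + (m : ℕ) * (-((θ:ℂ) * Complex.I)))) by
      push_cast; ring]
    rw [Complex.exp_add, Complex.exp_add, Complex.exp_add,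
      Complex.exp_nat_mul, Complex.exp_nat_mul, Complex.exp_nat_mul, Complex.exp_nat_mul]
    push_cast
    ring
  rw [h1, h3]
  simp only [Complex.re_sum]
  refine Finset.sum_congr rfl fun j _ => Finset.sum_congr rfl fun k _ =>
    Finset.sum_congr rfl fun l _ => Finset.sum_congr rfl fun m _ => ?_
  rw [Complex.re_ofReal_mul, Complex.exp_ofReal_mul_I_re]

lemma cos_int_integral (d : ℤ) :
    ∫ θ in (0:ℝ)..(2*Real.pi), Real.cos (d * θ) = if d = 0 then 2*Real.pi else 0 := by
  split_ifs with h
  · subst h; simp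
  · have hd : (d:ℝ) ≠ 0 := Int.cast_ne_zero.mpr h
    rw [intervalIntegral.integral_comp_mul_left Real.cos hd, mul_zero, integral_cos,
      Real.sin_zero, sub_zero,
      show (d:ℝ) * (2*Real.pi) = (2*d : ℤ) * Real.pi by push_cast; ring,
      Real.sin_int_mul_pi, smul_zero]

lemma L4_eq (n : ℕ) (a : ℕ → ℝ) :
    L4pow4 n a = ∑ j ∈ range n, ∑ k ∈ range n, ∑ l ∈ range n, ∑ m ∈ range n,
      if j + l = k + m then a j * a k * a l * a m else 0 := by
  unfold L4pow4
  simp only [pointwise_expand n a]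
  rw [intervalIntegral.integral_finset_sum (fun j _ => (by fun_prop : Continuous fun θ : ℝ =>
    ∑ k ∈ range n, ∑ l ∈ range n, ∑ m ∈ range n,
      a j * a k * a l * a m * Real.cos (((j:ℝ) + l - k - m) * θ)).intervalIntegrable _ _)]
  rw [Finset.mul_sum]
  refine Finset.sum_congr rfl fun j _ => ?_
  rw [intervalIntegral.integral_finset_sum (fun k _ => (by fun_prop : Continuous fun θ : ℝ =>
    ∑ l ∈ range n, ∑ m ∈ range n,
      a j * a k * a l * a m * Real.cos (((j:ℝ) + l - k - m) * θ)).intervalIntegrable _ _)]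
  rw [Finset.mul_sum]
  refine Finset.sum_congr rfl fun k _ => ?_
  rw [intervalIntegral.integral_finset_sum (fun l _ => (by fun_prop : Continuous fun θ : ℝ =>
    ∑ m ∈ range n,
      a j * a k * a l * a m * Real.cos (((j:ℝ) + l - k - m) * θ)).intervalIntegrable _ _)]
  rw [Finset.mul_sum]
  refine Finset.sum_congr rfl fun l _ => ?_
  rw [intervalIntegral.integral_finset_sum (fun m _ => (by fun_prop : Continuous fun θ : ℝ =>
      a j * a k * a l * a m * Real.cos (((j:ℝ) + l - k - m) * θ)).intervalIntegrable _ _)]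
  rw [Finset.mul_sum]
  refine Finset.sum_congr rfl fun m _ => ?_
  rw [intervalIntegral.integral_const_mul]
  have hcast : ∀ θ : ℝ, ((j:ℝ) + l - k - m) * θ = (((j:ℤ) + l - k - m : ℤ) : ℝ) * θ := by
    intro θ; push_cast; ring
  simp only [hcast]
  rw [cos_int_integral]
  have hpi : Real.pi ≠ 0 := Real.pi_ne_zero
  by_cases hc : j + l = k + m
  · have : ((j:ℤ) + l - k - m : ℤ) = 0 := by omega
    rw [if_pos this, if_pos hc]
    field_simp
    try ring
  · have : ((j:ℤ) + l - k - m : ℤ) ≠ 0 := by omega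
    rw [if_neg this, if_neg hc]
    ring

lemma signs_sq (n : ℕ) (a : Fin n → Bool) {i : ℕ} (hi : i < n) :
    signs n a i * signs n a i = 1 := by
  unfold signs
  rw [dif_pos hi]
  split_ifs <;> norm_num

lemma signs_update (n : ℕ) (a : Fin n → Bool) (i : Fin n) (x : ℕ) (hx : x < n) :
    signs n (Function.update a i (!(a i))) x
      = (if x = (i : ℕ) then -1 else 1) * signs n a x := by
  unfold signs
  rw [dif_pos hx, dif_pos hx]
  by_cases h : (⟨x, hx⟩ : Fin n) = i
  · have hx' : x = (i : ℕ) := by rw [← h]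
    rw [if_pos hx', ← h, Function.update_self]
    cases a ⟨x, hx⟩ <;> norm_num
  · have hx' : x ≠ (i : ℕ) := fun hh => h (Fin.ext hh)
    rw [if_neg hx', Function.update_of_ne h, one_mul]

lemma sum_flip {n : ℕ} (f : (Fin n → Bool) → ℝ) (i : Fin n)
    (hf : ∀ a, f (Function.update a i (!(a i))) = - f a) :
    ∑ a : Fin n → Bool, f a = 0 := by
  have hinv : Function.Involutive (fun a : Fin n → Bool => Function.update a i (!(a i))) := by
    intro a
    funext x
    by_cases h : x = i
    · subst h; simp
    · simp [Function.update_of_ne h]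
  have h2 := Fintype.sum_equiv hinv.toPerm f (fun a => - f a) (by
    intro a
    show f a = - f (Function.update a i (!(a i)))
    rw [hf a, neg_neg])
  rw [Finset.sum_neg_distrib] at h2
  linarith [h2]

lemma sum_signs (n : ℕ) {j k l m : ℕ} (hj : j < n) (hk : k < n) (hl : l < n) (hm : m < n)
    (hc : j + l = k + m) :
    ∑ a : Fin n → Bool, signs n a j * signs n a k * signs n a l * signs n a m
      = if (j = k ∧ l = m) ∨ (j = m ∧ k = l) then (2:ℝ)^n else 0 := by
  split_ifs with h
  · have key : ∀ a : Fin n → Bool,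
        signs n a j * signs n a k * signs n a l * signs n a m = 1 := by
      intro a
      rcases h with ⟨rfl, rfl⟩ | ⟨rfl, rfl⟩
      · calc signs n a j * signs n a j * signs n a l * signs n a l
            = (signs n a j * signs n a j) * (signs n a l * signs n a l) := by ring
          _ = 1 := by rw [signs_sq n a hj, signs_sq n a hl, one_mul]
      · calc signs n a j * signs n a k * signs n a k * signs n a j
            = (signs n a j * signs n a j) * (signs n a k * signs n a k) := by ring
          _ = 1 := by rw [signs_sq n a hj, signs_sq n a hk, one_mul]
    simp only [key, Finset.sum_const, Finset.card_univ]
    simp [Fintype.card_fun]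
  · -- no pairing: find an index occurring an odd number of times
    push_neg at h
    have hjk : j ≠ k := fun e => h.1 e (by omega)
    have hjm : j ≠ m := fun e => h.2 e (by omega)
    by_cases hjl : j = l
    · subst hjl
      have hmk : m ≠ k := by omega
      refine sum_flip _ ⟨k, hk⟩ ?_
      intro a
      rw [signs_update n a ⟨k, hk⟩ j hj, signs_update n a ⟨k, hk⟩ k hk,
        signs_update n a ⟨k, hk⟩ m hm]
      simp only [Fin.val_mk, if_neg hjk, if_neg hmk, if_pos rfl, if_true]
      ring
    · refine sum_flip _ ⟨j, hj⟩ ?_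
      intro a
      rw [signs_update n a ⟨j, hj⟩ j hj, signs_update n a ⟨j, hj⟩ k hk,
        signs_update n a ⟨j, hj⟩ l hl, signs_update n a ⟨j, hj⟩ m hm]
      simp only [Fin.val_mk, if_pos rfl, if_true, if_neg (Ne.symm hjk), if_neg (Ne.symm hjl),
        if_neg (Ne.symm hjm)]
      ring

lemma sum_ite_prop {P : Prop} [Decidable P] (s : Finset ℕ) (f : ℕ → ℝ) :
    ∑ m ∈ s, (if P then f m else 0) = if P then ∑ m ∈ s, f m else 0 := by
  split_ifs <;> simp

lemma count_sum (n : ℕ) :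
    ∑ j ∈ range n, ∑ k ∈ range n, ∑ l ∈ range n, ∑ m ∈ range n,
      (if (j = k ∧ l = m) ∨ (j = m ∧ k = l) then (1:ℝ) else 0)
      = 2 * (n:ℝ)^2 - n := by
  have hsplit : ∀ j k l m : ℕ, (if (j = k ∧ l = m) ∨ (j = m ∧ k = l) then (1:ℝ) else 0)
      = ((if j = k ∧ l = m then (1:ℝ) else 0) + (if j = m ∧ k = l then (1:ℝ) else 0))
        - (if j = k ∧ k = l ∧ l = m then (1:ℝ) else 0) := by
    intro j k l m
    split_ifs <;> (try norm_num) <;> omega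
  simp only [hsplit, Finset.sum_sub_distrib, Finset.sum_add_distrib]
  have S1 : ∑ j ∈ range n, ∑ k ∈ range n, ∑ l ∈ range n, ∑ m ∈ range n,
      (if j = k ∧ l = m then (1:ℝ) else 0) = (n:ℝ)^2 := by
    have h1 : ∀ j k : ℕ, ∑ l ∈ range n, ∑ m ∈ range n,
        (if j = k ∧ l = m then (1:ℝ) else 0) = (n:ℝ) * (if j = k then 1 else 0) := by
      intro j k
      have hm : ∀ l ∈ range n, ∑ m ∈ range n, (if j = k ∧ l = m then (1:ℝ) else 0)
          = if j = k then 1 else 0 := by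
        intro l hl
        simp only [ite_and]
        rw [sum_ite_prop, Finset.sum_ite_eq (range n) l (fun _ => (1:ℝ)), if_pos hl]
      rw [Finset.sum_congr rfl hm, Finset.sum_const, Finset.card_range, nsmul_eq_mul]
    rw [Finset.sum_congr rfl fun j _ => Finset.sum_congr rfl fun k _ => h1 j k]
    have h2 : ∀ j ∈ range n, ∑ k ∈ range n, (n:ℝ) * (if j = k then 1 else 0) = (n:ℝ) := by
      intro j hj
      rw [← Finset.mul_sum, Finset.sum_ite_eq (range n) j (fun _ => (1:ℝ)), if_pos hj, mul_one]
    rw [Finset.sum_congr rfl h2, Finset.sum_const, Finset.card_range, nsmul_eq_mul]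
    ring
  have S2 : ∑ j ∈ range n, ∑ k ∈ range n, ∑ l ∈ range n, ∑ m ∈ range n,
      (if j = m ∧ k = l then (1:ℝ) else 0) = (n:ℝ)^2 := by
    have h1 : ∀ j ∈ range n, ∀ k ∈ range n, ∑ l ∈ range n, ∑ m ∈ range n,
        (if j = m ∧ k = l then (1:ℝ) else 0) = 1 := by
      intro j hj k hk
      have hm : ∀ l ∈ range n, ∑ m ∈ range n, (if j = m ∧ k = l then (1:ℝ) else 0)
          = if k = l then 1 else 0 := by
        intro l hl
        have : ∀ m : ℕ, (if j = m ∧ k = l then (1:ℝ) else 0)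
            = if j = m then (if k = l then (1:ℝ) else 0) else 0 := by
          intro m; simp [ite_and]
        rw [Finset.sum_congr rfl fun m _ => this m,
          Finset.sum_ite_eq (range n) j (fun _ => if k = l then (1:ℝ) else 0), if_pos hj]
      rw [Finset.sum_congr rfl hm, Finset.sum_ite_eq (range n) k (fun _ => (1:ℝ)), if_pos hk]
    rw [Finset.sum_congr rfl fun j hj => (Finset.sum_congr rfl (h1 j hj)).trans
      (by rw [Finset.sum_const, Finset.card_range, nsmul_eq_mul, mul_one]),
      Finset.sum_const, Finset.card_range, nsmul_eq_mul]
    ring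
  have S3 : ∑ j ∈ range n, ∑ k ∈ range n, ∑ l ∈ range n, ∑ m ∈ range n,
      (if j = k ∧ k = l ∧ l = m then (1:ℝ) else 0) = (n:ℝ) := by
    have h1 : ∀ j ∈ range n, ∑ k ∈ range n, ∑ l ∈ range n, ∑ m ∈ range n,
        (if j = k ∧ k = l ∧ l = m then (1:ℝ) else 0) = 1 := by
      intro j hj
      have hm : ∀ k l : ℕ, l ∈ range n → ∑ m ∈ range n,
          (if j = k ∧ k = l ∧ l = m then (1:ℝ) else 0)
          = if j = k ∧ k = l then 1 else 0 := by
        intro k l hl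
        have : ∀ m : ℕ, (if j = k ∧ k = l ∧ l = m then (1:ℝ) else 0)
            = if l = m then (if j = k ∧ k = l then (1:ℝ) else 0) else 0 := by
          intro m; by_cases h1 : l = m <;> by_cases h2 : j = k ∧ k = l <;> simp_all
        rw [Finset.sum_congr rfl fun m _ => this m,
          Finset.sum_ite_eq (range n) l (fun _ => if j = k ∧ k = l then (1:ℝ) else 0),
          if_pos hl]
      have hl : ∀ k ∈ range n, ∑ l ∈ range n,
          (if j = k ∧ k = l then (1:ℝ) else 0) = if j = k then 1 else 0 := by
        intro k hk
        have : ∀ l : ℕ, (if j = k ∧ k = l then (1:ℝ) else 0)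
            = if k = l then (if j = k then (1:ℝ) else 0) else 0 := by
          intro l; by_cases h1 : k = l <;> by_cases h2 : j = k <;> simp_all
        rw [Finset.sum_congr rfl fun l _ => this l,
          Finset.sum_ite_eq (range n) k (fun _ => if j = k then (1:ℝ) else 0), if_pos hk]
      rw [Finset.sum_congr rfl fun k hk =>
        (Finset.sum_congr rfl (fun l hl' => hm k l hl')).trans (hl k hk),
        Finset.sum_ite_eq (range n) j (fun _ => (1:ℝ)), if_pos hj]
    rw [Finset.sum_congr rfl h1, Finset.sum_const, Finset.card_range, nsmul_eq_mul, mul_one]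
  rw [S1, S2, S3]
  ring

/-- For `f` drawn uniformly at random from the Littlewood polynomials of length `n`,
`E(‖f‖₄⁴) = 2n² - n`. -/
theorem stmt_12 (n : ℕ) (hn : 1 < n) :
    (1 / 2 ^ n : ℝ) * ∑ a : Fin n → Bool, L4pow4 n (signs n a) =
      2 * (n : ℝ) ^ 2 - n := by
  have hswap : ∑ a : Fin n → Bool, L4pow4 n (signs n a)
      = ∑ j ∈ range n, ∑ k ∈ range n, ∑ l ∈ range n, ∑ m ∈ range n,
          (if j + l = k + m then
            ∑ a : Fin n → Bool, signs n a j * signs n a k * signs n a l * signs n a m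
          else 0) := by
    simp only [L4_eq]
    rw [Finset.sum_comm]
    refine Finset.sum_congr rfl fun j _ => ?_
    rw [Finset.sum_comm]
    refine Finset.sum_congr rfl fun k _ => ?_
    rw [Finset.sum_comm]
    refine Finset.sum_congr rfl fun l _ => ?_
    rw [Finset.sum_comm]
    refine Finset.sum_congr rfl fun m _ => ?_
    split_ifs with hc
    · rfl
    · simp
  have hterm : ∀ j ∈ range n, ∀ k ∈ range n, ∀ l ∈ range n, ∀ m ∈ range n,
      (if j + l = k + m then
        ∑ a : Fin n → Bool, signs n a j * signs n a k * signs n a l * signs n a m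
      else 0)
      = (2:ℝ)^n * (if (j = k ∧ l = m) ∨ (j = m ∧ k = l) then (1:ℝ) else 0) := by
    intro j hj k hk l hl m hm
    rw [Finset.mem_range] at hj hk hl hm
    by_cases hc : j + l = k + m
    · rw [if_pos hc, sum_signs n hj hk hl hm hc]
      split_ifs <;> ring
    · rw [if_neg hc]
      have : ¬((j = k ∧ l = m) ∨ (j = m ∧ k = l)) := by omega
      rw [if_neg this, mul_zero]
  rw [hswap,
    Finset.sum_congr rfl fun j hj => Finset.sum_congr rfl fun k hk =>
      Finset.sum_congr rfl fun l hl => Finset.sum_congr rfl fun m hm =>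
        hterm j hj k hk l hl m hm]
  simp only [← Finset.mul_sum]
  rw [count_sum]
  have h2 : (2:ℝ)^n ≠ 0 := by positivity
  field_simp
  try ring
end
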